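/- The 3-uniform hypergraph with multiplicities on vertex set [3] whose only edges are the multisets {{1,1,3}} and {{2,2,3}} cannot be represented as a generalized Kneser hypergraph KG^3_s(S) for any family S = {S_1,S_2,S_3} and any intersection multiplicities s: if both {{S_1,S_1,S_3}} and {{S_2,S_2,S_3}} are s-disjoint, then so is {{S_1,S_2,S_3}}. -/
import Mathlib


/-- A multiset of finite sets is `s`-disjoint if each ground element `i` occurs,
counted with multiplicity, in at most `s i` of the sets. -/
def sDisj (m : ℕ) (s : Fin m → ℕ) (e : Multiset (Finset (Fin m))) : Prop :=
  ∀ i : Fin m, e.countP (fun T => i ∈ T) ≤ s i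

/-- The 3-uniform hypergraph with multiplicities on `[3]` (here `Fin 3`) whose
only edges are `{{1,1,3}}` and `{{2,2,3}}` (here `{0,0,2}` and `{1,1,2}`) cannot
be represented as a generalized Kneser hypergraph `KG³_s(S)` for any family
`S = {S₁,S₂,S₃}` and multiplicities `s`; indeed, if `{{S₁,S₁,S₃}}` and
`{{S₂,S₂,S₃}}` are both `s`-disjoint then so is `{{S₁,S₂,S₃}}`. -/
theorem stmt10 :
    (∀ (m : ℕ) (s : Fin m → ℕ) (S : Fin 3 → Finset (Fin m)),
      sDisj m s {S 0, S 0, S 2} → sDisj m s {S 1, S 1, S 2} →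
      sDisj m s {S 0, S 1, S 2}) ∧
    ¬ ∃ (m : ℕ) (s : Fin m → ℕ) (S : Fin 3 → Finset (Fin m)),
      Function.Injective S ∧
      ∀ e : Multiset (Fin 3), Multiset.card e = 3 →
        (∃ a ∈ e, ∃ b ∈ e, a ≠ b) →
        (sDisj m s (e.map S) ↔
          e ∈ ({({0, 0, 2} : Multiset (Fin 3)), ({1, 1, 2} : Multiset (Fin 3))} :
            Set (Multiset (Fin 3)))) := by
  have key : ∀ (m : ℕ) (s : Fin m → ℕ) (S : Fin 3 → Finset (Fin m)),
      sDisj m s {S 0, S 0, S 2} → sDisj m s {S 1, S 1, S 2} →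
      sDisj m s {S 0, S 1, S 2} := by
    intro m s S h1 h2 i
    have a := h1 i
    have b := h2 i
    simp only [sDisj, Multiset.insert_eq_cons, Multiset.countP_cons] at *
    norm_num [Multiset.countP_cons] at *
    split_ifs at * <;> omega
  refine ⟨key, ?_⟩
  rintro ⟨m, s, S, hinj, h⟩
  have e1 : sDisj m s (Multiset.map S {0,0,2}) :=
    (h {0,0,2} (by decide) ⟨0, by decide, 2, by decide, by decide⟩).mpr (by left; rfl)
  have e2 : sDisj m s (Multiset.map S {1,1,2}) :=
    (h {1,1,2} (by decide) ⟨1, by decide, 2, by decide, by decide⟩).mpr (by right; rfl)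
  have e3 : sDisj m s (Multiset.map S {0,1,2}) := by
    simp only [Multiset.insert_eq_cons, Multiset.map_cons, Multiset.map_singleton] at *
    exact key m s S e1 e2
  have := (h {0,1,2} (by decide) ⟨0, by decide, 2, by decide, by decide⟩).mp e3
  rcases this with h' | h' <;> revert h' <;> decide
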